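/- Let $(T, d_T)$ and $(M, d_M)$ be metric spaces, $T$ finite with $|T| \ge 2$, and let $f : M \to T$ be surjective with $d_T(f(a), f(b)) \le K\, d_M(a,b)^{1/2}$ for all $a, b \in M$ and some $K > 0$. Then $\gamma_2(T, d_T) \le C K (\log \log |T|)^{3/4}\, \gamma_{1,2}(M, d_M)^{1/2}$ for a universal constant $C$, where $\gamma_2(T,d) = \inf \sup_{t} \sum_{k\ge 0} 2^{k/2} \mathrm{diam}(A_k(t))$ and $\gamma_{1,2}(M,d) = \inf \sup_{t} (\sum_{k \ge 0} (2^k \mathrm{diam}(A_k(t)))^2)^{1/2}$, with infima over admissible partition sequences $\{\mathscr{A}_k\}$ (increasing partitions with $|\mathscr{A}_k| \le 2^{2^k}$) and $A_k(t)$ the element of $\mathscr{A}_k$ containing $t$. -/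

import Mathlib

open scoped ENNReal

/-- An admissible sequence of partitions: each `𝒜 k` is a partition, the sequence is
increasing (each `𝒜 (k+1)` refines `𝒜 k`), and `|𝒜 k| ≤ 2^(2^k)`. -/
def IsAdmissibleSeq (α : Type*) (𝒜 : ℕ → Set (Set α)) : Prop :=
  (∀ k, Setoid.IsPartition (𝒜 k)) ∧
  (∀ k, ∀ A ∈ 𝒜 (k + 1), ∃ B ∈ 𝒜 k, A ⊆ B) ∧
  (∀ k, (𝒜 k).Finite ∧ (𝒜 k).ncard ≤ 2 ^ 2 ^ k)

/-- The diameter of the element `A_k(t)` of the partition `𝒜 k` containing `t`. -/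
noncomputable def chainDiam {α : Type*} [PseudoEMetricSpace α]
    (𝒜 : ℕ → Set (Set α)) (k : ℕ) (t : α) : ℝ≥0∞ :=
  ⨆ A ∈ {A ∈ 𝒜 k | t ∈ A}, EMetric.diam A

/-- Talagrand's `γ₂` functional. -/
noncomputable def gamma2 (α : Type*) [PseudoEMetricSpace α] : ℝ≥0∞ :=
  ⨅ 𝒜 ∈ {𝒜 : ℕ → Set (Set α) | IsAdmissibleSeq α 𝒜},
    ⨆ t : α, ∑' k : ℕ, (2 : ℝ≥0∞) ^ ((k : ℝ) / 2) * chainDiam 𝒜 k t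

/-- Talagrand's `γ₁,₂` functional. -/
noncomputable def gamma12 (α : Type*) [PseudoEMetricSpace α] : ℝ≥0∞ :=
  ⨅ 𝒜 ∈ {𝒜 : ℕ → Set (Set α) | IsAdmissibleSeq α 𝒜},
    ⨆ t : α, (∑' k : ℕ, ((2 : ℝ≥0∞) ^ (k : ℕ) * chainDiam 𝒜 k t) ^ 2) ^ ((1 : ℝ) / 2)


lemma aux_mul_le_sq_add_sq (a b : ℝ≥0∞) : a * b ≤ a ^ 2 + b ^ 2 := by
  rcases le_total a b with h | h
  · calc a * b ≤ b * b := by exact mul_le_mul_left h b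
    _ = b ^ 2 := (sq b).symm
    _ ≤ _ := le_add_self
  · calc a * b ≤ a * a := by exact mul_le_mul_right h a
    _ = a ^ 2 := (sq a).symm
    _ ≤ _ := self_le_add_right _ _

lemma aux_sq_sum_le (s : Finset ℕ) (x : ℕ → ℝ≥0∞) :
    (∑ i ∈ s, x i) ^ 2 ≤ (2 * s.card) * ∑ i ∈ s, (x i) ^ 2 := by
  rw [sq, Finset.sum_mul_sum]
  calc ∑ i ∈ s, ∑ j ∈ s, x i * x j
      ≤ ∑ i ∈ s, ∑ j ∈ s, (x i ^ 2 + x j ^ 2) := by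
        exact Finset.sum_le_sum fun i _ => Finset.sum_le_sum fun j _ => aux_mul_le_sq_add_sq _ _
    _ = (2 * s.card) * ∑ i ∈ s, (x i) ^ 2 := by
        simp [Finset.sum_add_distrib, Finset.mul_sum, mul_comm, two_mul, add_mul]
        rw [← Finset.sum_add_distrib]
        congr 1; ext i; ring

lemma aux_sum_le (s : Finset ℕ) (x : ℕ → ℝ≥0∞) :
    ∑ i ∈ s, x i ≤ (2 * s.card : ℝ≥0∞) ^ ((1:ℝ)/2) * (∑ i ∈ s, (x i) ^ 2) ^ ((1:ℝ)/2) := by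
  have h := aux_sq_sum_le s x
  have h2 : ((∑ i ∈ s, x i) ^ 2) ^ ((1:ℝ)/2) ≤ ((2 * s.card : ℝ≥0∞) * ∑ i ∈ s, (x i) ^ 2) ^ ((1:ℝ)/2) :=
    ENNReal.rpow_le_rpow h (by norm_num)
  rwa [ENNReal.mul_rpow_of_nonneg _ _ (by norm_num), ← ENNReal.rpow_natCast _ 2,
    ← ENNReal.rpow_mul, (by norm_num : ((2:ℕ):ℝ) * ((1:ℝ)/2) = 1), ENNReal.rpow_one] at h2


lemma chainDiam_le {α : Type*} [PseudoEMetricSpace α] {𝒜 : ℕ → Set (Set α)} {k : ℕ} {t : α}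
    {c : ℝ≥0∞} (h : ∀ A ∈ 𝒜 k, t ∈ A → EMetric.diam A ≤ c) : chainDiam 𝒜 k t ≤ c := by
  refine iSup₂_le fun A hA => ?_
  exact h A hA.1 hA.2

lemma le_chainDiam {α : Type*} [PseudoEMetricSpace α] {𝒜 : ℕ → Set (Set α)} {k : ℕ} {t : α}
    {A : Set α} (hA : A ∈ 𝒜 k) (ht : t ∈ A) : EMetric.diam A ≤ chainDiam 𝒜 k t := by
  have : A ∈ {A ∈ 𝒜 k | t ∈ A} := ⟨hA, ht⟩
  exact le_iSup₂ (f := fun (A : Set α) (_ : A ∈ {A ∈ 𝒜 k | t ∈ A}) => EMetric.diam A) A this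

lemma gamma2_le {α : Type*} [PseudoEMetricSpace α] {𝒜 : ℕ → Set (Set α)}
    (h : IsAdmissibleSeq α 𝒜) :
    gamma2 α ≤ ⨆ t : α, ∑' k : ℕ, (2 : ℝ≥0∞) ^ ((k : ℝ) / 2) * chainDiam 𝒜 k t :=
  biInf_le _ h

lemma trivialSeq_admissible (α : Type*) [Nonempty α] :
    IsAdmissibleSeq α (fun _ => {Set.univ}) := by
  refine ⟨fun k => ⟨by simp [(Set.univ_nonempty (α := α)).ne_empty.symm], fun a => ⟨Set.univ, by simp⟩⟩,
    fun k A hA => ⟨Set.univ, by simp, by simp_all⟩, fun k => ⟨Set.finite_singleton _, ?_⟩⟩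
  rw [Set.ncard_singleton]
  exact Nat.one_le_two_pow

lemma aux_log3 : (1.03 : ℝ) ≤ Real.log 3 := by
  have h8 : Real.log 8 ≤ Real.log 9 := Real.log_le_log (by norm_num) (by norm_num)
  have h9 : Real.log 9 = 2 * Real.log 3 := by
    rw [show (9:ℝ) = 3 ^ 2 by norm_num, Real.log_pow]; push_cast; ring
  have h8' : Real.log 8 = 3 * Real.log 2 := by
    rw [show (8:ℝ) = 2 ^ 3 by norm_num, Real.log_pow]; push_cast; ring
  have := Real.log_two_gt_d9
  nlinarith

lemma aux_loglog3 : (1/40 : ℝ) ≤ Real.log (Real.log 3) := by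
  have h3 : (1.03 : ℝ) ≤ Real.log 3 := aux_log3
  have h := Real.one_sub_inv_le_log_of_pos (x := Real.log 3) (by linarith)
  have : (Real.log 3)⁻¹ ≤ (1.03 : ℝ)⁻¹ := by
    apply inv_anti₀ (by norm_num) h3
  have : (1 : ℝ) - (1.03:ℝ)⁻¹ ≤ 1 - (Real.log 3)⁻¹ := by linarith
  have hnum : (1/40 : ℝ) ≤ 1 - (1.03:ℝ)⁻¹ := by norm_num
  linarith

lemma aux_numeric {N n : ℕ} (hN : 3 ≤ N) (hn : 1 ≤ n) (h : 2 ^ 2 ^ (n - 1) < N) :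
    (2 * n : ℝ) ≤ 270 * Real.log (Real.log (N : ℝ)) := by
  have hlog3pos : (0:ℝ) < Real.log 3 := lt_of_lt_of_le (by norm_num) aux_log3
  have hlogN : Real.log 3 ≤ Real.log N :=
    Real.log_le_log (by norm_num) (by exact_mod_cast hN)
  have hLL : Real.log (Real.log 3) ≤ Real.log (Real.log (N:ℝ)) :=
    Real.log_le_log hlog3pos hlogN
  have hL27 : (1/40 : ℝ) ≤ Real.log (Real.log (N:ℝ)) := le_trans aux_loglog3 hLL
  rcases le_or_gt n 2 with hn2 | hn2
  · have : (2 * n : ℝ) ≤ 4 := by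
      have : (n:ℝ) ≤ 2 := by exact_mod_cast hn2
      linarith
    linarith
  · obtain ⟨m, rfl⟩ : ∃ m, n = m + 3 := ⟨n - 3, by omega⟩
    have hlog2 : (1/2 : ℝ) ≤ Real.log 2 := by
      have := Real.log_two_gt_d9; linarith
    have h1 : ((2:ℝ) ^ (2 ^ (m + 2))) ≤ (N : ℝ) := by
      have : (2 ^ 2 ^ (m + 2) : ℕ) ≤ N := by
        have : m + 3 - 1 = m + 2 := by omega
        rw [this] at h; omega
      exact_mod_cast this
    have h2 : (2:ℝ) ^ (m + 1) ≤ Real.log N := by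
      have := Real.log_le_log (by positivity) h1
      rw [Real.log_pow] at this
      have h3 : (2:ℝ) ^ (m+1) ≤ (2 ^ (m + 2) : ℕ) * Real.log 2 := by
        have : ((2:ℝ) ^ (m+2) : ℝ) * (1/2) = 2 ^ (m+1) := by ring
        calc (2:ℝ) ^ (m+1) = (2:ℝ) ^ (m+2) * (1/2) := by ring
          _ ≤ (2:ℝ) ^ (m+2) * Real.log 2 := by
              apply mul_le_mul_of_nonneg_left hlog2 (by positivity)
          _ = (2 ^ (m + 2) : ℕ) * Real.log 2 := by push_cast; ring
      linarith
    have h4 : ((m:ℝ) + 1) * (1/2) ≤ Real.log (Real.log (N:ℝ)) := by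
      have h5 := Real.log_le_log (by positivity) h2
      rw [Real.log_pow] at h5
      push_cast at h5
      nlinarith [hlog2, Nat.cast_nonneg (α := ℝ) m]
    push_cast
    linarith

lemma aux_rpow_sq (y : ℝ≥0∞) : (y ^ ((1:ℝ)/2)) ^ 2 = y := by
  rw [← ENNReal.rpow_natCast (y ^ ((1:ℝ)/2)) 2, ← ENNReal.rpow_mul]
  norm_num

lemma aux_chain (n : ℕ) (y : ℕ → ℝ≥0∞) :
    ∑ k ∈ Finset.range n, (y k) ^ ((1:ℝ)/2)
      ≤ ((2 * n : ℕ) : ℝ≥0∞) ^ ((3:ℝ)/4) * (∑ k ∈ Finset.range n, (y k) ^ 2) ^ ((1:ℝ)/4) := by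
  rcases Nat.eq_zero_or_pos n with rfl | hn
  · simp
  set c : ℝ≥0∞ := ((2 * n : ℕ) : ℝ≥0∞) with hc
  have hc0 : c ≠ 0 := by simp [hc]; omega
  have hctop : c ≠ ∞ := by simp [hc]; exact ENNReal.mul_ne_top (by simp) (ENNReal.natCast_ne_top n)
  have hcard : ((2 * (Finset.range n).card : ℕ) : ℝ≥0∞) = c := by simp [hc]
  have h1 : ∑ k ∈ Finset.range n, (y k) ^ ((1:ℝ)/2)
      ≤ c ^ ((1:ℝ)/2) * (∑ k ∈ Finset.range n, y k) ^ ((1:ℝ)/2) := by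
    have := aux_sum_le (Finset.range n) (fun k => (y k) ^ ((1:ℝ)/2))
    simp only [aux_rpow_sq] at this
    calc ∑ k ∈ Finset.range n, (y k) ^ ((1:ℝ)/2)
        ≤ (2 * (Finset.range n).card : ℝ≥0∞) ^ ((1:ℝ)/2) *
            (∑ k ∈ Finset.range n, y k) ^ ((1:ℝ)/2) := this
      _ = _ := by rw [← hcard]; push_cast; ring_nf
  have h2 : ∑ k ∈ Finset.range n, y k
      ≤ c ^ ((1:ℝ)/2) * (∑ k ∈ Finset.range n, (y k) ^ 2) ^ ((1:ℝ)/2) := by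
    have := aux_sum_le (Finset.range n) y
    calc ∑ k ∈ Finset.range n, y k
        ≤ (2 * (Finset.range n).card : ℝ≥0∞) ^ ((1:ℝ)/2) *
            (∑ k ∈ Finset.range n, (y k) ^ 2) ^ ((1:ℝ)/2) := this
      _ = _ := by rw [← hcard]; push_cast; ring_nf
  calc ∑ k ∈ Finset.range n, (y k) ^ ((1:ℝ)/2)
      ≤ c ^ ((1:ℝ)/2) * (∑ k ∈ Finset.range n, y k) ^ ((1:ℝ)/2) := h1
    _ ≤ c ^ ((1:ℝ)/2) * (c ^ ((1:ℝ)/2) * (∑ k ∈ Finset.range n, (y k) ^ 2) ^ ((1:ℝ)/2)) ^ ((1:ℝ)/2) := by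
        exact mul_le_mul_right (ENNReal.rpow_le_rpow h2 (by norm_num)) _
    _ = c ^ ((3:ℝ)/4) * (∑ k ∈ Finset.range n, (y k) ^ 2) ^ ((1:ℝ)/4) := by
        rw [ENNReal.mul_rpow_of_nonneg _ _ (by norm_num), ← ENNReal.rpow_mul,
          ← ENNReal.rpow_mul, ← mul_assoc, ← ENNReal.rpow_add _ _ hc0 hctop]
        norm_num

lemma construct {M T : Type} [MetricSpace M] [MetricSpace T] [Finite T] [Nonempty M]
    (n : ℕ) (hcard : Nat.card T ≤ 2 ^ 2 ^ n)
    (f : M → T) (K : ℝ) (hK : 0 ≤ K) (hf : Function.Surjective f)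
    (hlip : ∀ a b : M, dist (f a) (f b) ≤ K * Real.sqrt (dist a b))
    {𝒜 : ℕ → Set (Set M)} (h𝒜 : IsAdmissibleSeq M 𝒜) :
    gamma2 T ≤ ENNReal.ofReal K * ((2 * n : ℕ) : ℝ≥0∞) ^ ((3:ℝ)/4) *
      (⨆ m : M, (∑' k : ℕ, ((2:ℝ≥0∞) ^ (k:ℕ) * chainDiam 𝒜 k m) ^ 2) ^ ((1:ℝ)/2)) ^ ((1:ℝ)/2) := by
  classical
  set g : T → M := Function.surjInv hf with hgdef
  have hg : ∀ t, f (g t) = t := fun t => Function.surjInv_eq hf t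
  set ℬ : ℕ → Set (Set T) :=
    fun k => if k < n then {B | ∃ A ∈ 𝒜 k, B = g ⁻¹' A ∧ B.Nonempty}
      else {B | ∃ t : T, B = {t}} with hℬ
  -- membership lemmas
  have hmem_lt : ∀ {k}, k < n → ∀ {B}, B ∈ ℬ k ↔ ∃ A ∈ 𝒜 k, B = g ⁻¹' A ∧ B.Nonempty := by
    intro k hk B; rw [hℬ]; simp only [if_pos hk]; rfl
  have hmem_ge : ∀ {k}, ¬ k < n → ∀ {B}, B ∈ ℬ k ↔ ∃ t : T, B = {t} := by
    intro k hk B; rw [hℬ]; simp only [if_neg hk]; rfl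
  have hadm : IsAdmissibleSeq T ℬ := by
    refine ⟨?_, ?_, ?_⟩
    · intro k
      by_cases hk : k < n
      · constructor
        · intro h0
          obtain ⟨A, hA, hBA, hne⟩ := (hmem_lt hk).1 h0
          exact Set.not_nonempty_empty hne
        · intro t
          obtain ⟨A, ⟨hA, htA⟩, huniq⟩ := (h𝒜.1 k).2 (g t)
          refine ⟨g ⁻¹' A, ⟨(hmem_lt hk).2 ⟨A, hA, rfl, ⟨t, htA⟩⟩, htA⟩, ?_⟩
          rintro B ⟨hB, htB⟩
          obtain ⟨A', hA', rfl, hne⟩ := (hmem_lt hk).1 hB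
          have : A' = A := huniq A' ⟨hA', htB⟩
          rw [this]
      · constructor
        · intro h0
          obtain ⟨t, ht⟩ := (hmem_ge hk).1 h0
          exact (Set.singleton_nonempty t).ne_empty ht.symm
        · intro t
          refine ⟨{t}, ⟨(hmem_ge hk).2 ⟨t, rfl⟩, rfl⟩, ?_⟩
          rintro B ⟨hB, htB⟩
          obtain ⟨t', rfl⟩ := (hmem_ge hk).1 hB
          simp only [Set.mem_singleton_iff] at htB
          rw [htB]
    · intro k B hB
      by_cases hk1 : k + 1 < n
      · have hk : k < n := by omega
        obtain ⟨A, hA, rfl, hne⟩ := (hmem_lt hk1).1 hB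
        obtain ⟨A', hA', hAA'⟩ := h𝒜.2.1 k A hA
        exact ⟨g ⁻¹' A', (hmem_lt hk).2 ⟨A', hA', rfl, hne.mono (Set.preimage_mono hAA')⟩,
          Set.preimage_mono hAA'⟩
      · obtain ⟨t, rfl⟩ := (hmem_ge hk1).1 hB
        by_cases hk : k < n
        · obtain ⟨A, ⟨hA, htA⟩, -⟩ := (h𝒜.1 k).2 (g t)
          exact ⟨g ⁻¹' A, (hmem_lt hk).2 ⟨A, hA, rfl, ⟨t, htA⟩⟩, by simpa using htA⟩
        · exact ⟨{t}, (hmem_ge hk).2 ⟨t, rfl⟩, le_refl _⟩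
    · intro k
      by_cases hk : k < n
      · have hsub : ℬ k ⊆ (fun A => g ⁻¹' A) '' (𝒜 k) := by
          intro B hB
          obtain ⟨A, hA, rfl, -⟩ := (hmem_lt hk).1 hB
          exact ⟨A, hA, rfl⟩
        have hfin : (ℬ k).Finite := (((h𝒜.2.2 k).1).image _).subset hsub
        refine ⟨hfin, ?_⟩
        calc (ℬ k).ncard ≤ ((fun A => g ⁻¹' A) '' (𝒜 k)).ncard :=
              Set.ncard_le_ncard hsub ((h𝒜.2.2 k).1.image _)
          _ ≤ (𝒜 k).ncard := Set.ncard_image_le (h𝒜.2.2 k).1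
          _ ≤ 2 ^ 2 ^ k := (h𝒜.2.2 k).2
      · have hinj : Function.Injective (fun t : T => ({t} : Set T)) :=
          fun a b h => Set.singleton_injective h
        have heq : ℬ k = Set.range (fun t : T => ({t} : Set T)) := by
          ext B
          rw [hmem_ge hk]
          simp [Set.mem_range, eq_comm]
        refine ⟨by rw [heq]; exact Set.finite_range _, ?_⟩
        rw [heq, ← Nat.card_coe_set_eq, Nat.card_range_of_injective hinj]
        exact le_trans hcard (Nat.pow_le_pow_right (by norm_num)
          (Nat.pow_le_pow_right (by norm_num) (by omega)))
  -- diameter bounds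
  have hdiam_lt : ∀ k, k < n → ∀ t : T,
      chainDiam ℬ k t ≤ ENNReal.ofReal K * (chainDiam 𝒜 k (g t)) ^ ((1:ℝ)/2) := by
    intro k hk t
    refine chainDiam_le fun B hB htB => ?_
    obtain ⟨A, hA, rfl, -⟩ := (hmem_lt hk).1 hB
    have hAd : EMetric.diam A ≤ chainDiam 𝒜 k (g t) := le_chainDiam hA htB
    refine EMetric.diam_le fun x hx y hy => ?_
    have h1 : dist x y ≤ K * Real.sqrt (dist (g x) (g y)) := by
      have := hlip (g x) (g y); rwa [hg x, hg y] at this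
    have hxy : edist x y ≤ ENNReal.ofReal K * (edist (g x) (g y)) ^ ((1:ℝ)/2) := by
      calc edist x y = ENNReal.ofReal (dist x y) := edist_dist x y
        _ ≤ ENNReal.ofReal (K * Real.sqrt (dist (g x) (g y))) := ENNReal.ofReal_le_ofReal h1
        _ = ENNReal.ofReal K * ENNReal.ofReal (Real.sqrt (dist (g x) (g y))) :=
            ENNReal.ofReal_mul hK
        _ = ENNReal.ofReal K * (edist (g x) (g y)) ^ ((1:ℝ)/2) := by
            rw [Real.sqrt_eq_rpow, ← ENNReal.ofReal_rpow_of_nonneg dist_nonneg (by norm_num),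
              edist_dist]
    refine hxy.trans (mul_le_mul_right (ENNReal.rpow_le_rpow ?_ (by norm_num)) _)
    exact le_trans (EMetric.edist_le_diam_of_mem hx hy) hAd
  have hdiam_ge : ∀ k, ¬ k < n → ∀ t : T, chainDiam ℬ k t = 0 := by
    intro k hk t
    refine le_antisymm (chainDiam_le fun B hB htB => ?_) zero_le
    obtain ⟨t', rfl⟩ := (hmem_ge hk).1 hB
    exact (EMetric.diam_singleton (x := t')).le
  refine (gamma2_le hadm).trans (iSup_le fun t => ?_)
  have hsum : ∑' k : ℕ, (2 : ℝ≥0∞) ^ ((k : ℝ) / 2) * chainDiam ℬ k t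
      = ∑ k ∈ Finset.range n, (2 : ℝ≥0∞) ^ ((k : ℝ) / 2) * chainDiam ℬ k t := by
    refine tsum_eq_sum fun k hk => ?_
    rw [hdiam_ge k (by simpa using hk) t, mul_zero]
  rw [hsum]
  set a : ℕ → ℝ≥0∞ := fun k => chainDiam 𝒜 k (g t) with ha
  set y : ℕ → ℝ≥0∞ := fun k => (2:ℝ≥0∞) ^ (k:ℕ) * a k with hy
  have hterm : ∀ k ∈ Finset.range n, (2 : ℝ≥0∞) ^ ((k : ℝ) / 2) * chainDiam ℬ k t
      ≤ ENNReal.ofReal K * (y k) ^ ((1:ℝ)/2) := by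
    intro k hk
    have h2 : (2 : ℝ≥0∞) ^ ((k : ℝ) / 2) = ((2:ℝ≥0∞) ^ (k:ℕ)) ^ ((1:ℝ)/2) := by
      rw [← ENNReal.rpow_natCast 2 k, ← ENNReal.rpow_mul]
      congr 1; ring
    calc (2 : ℝ≥0∞) ^ ((k : ℝ) / 2) * chainDiam ℬ k t
        ≤ (2 : ℝ≥0∞) ^ ((k : ℝ) / 2) * (ENNReal.ofReal K * (a k) ^ ((1:ℝ)/2)) :=
          mul_le_mul_right (hdiam_lt k (Finset.mem_range.1 hk) t) _
      _ = ENNReal.ofReal K * (((2:ℝ≥0∞) ^ (k:ℕ)) ^ ((1:ℝ)/2) * (a k) ^ ((1:ℝ)/2)) := by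
          rw [h2]; ring
      _ = ENNReal.ofReal K * (y k) ^ ((1:ℝ)/2) := by
          rw [← ENNReal.mul_rpow_of_nonneg _ _ (by norm_num)]
  calc ∑ k ∈ Finset.range n, (2 : ℝ≥0∞) ^ ((k : ℝ) / 2) * chainDiam ℬ k t
      ≤ ∑ k ∈ Finset.range n, ENNReal.ofReal K * (y k) ^ ((1:ℝ)/2) :=
        Finset.sum_le_sum hterm
    _ = ENNReal.ofReal K * ∑ k ∈ Finset.range n, (y k) ^ ((1:ℝ)/2) := by
        rw [Finset.mul_sum]
    _ ≤ ENNReal.ofReal K * (((2 * n : ℕ) : ℝ≥0∞) ^ ((3:ℝ)/4) *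
          (∑ k ∈ Finset.range n, (y k) ^ 2) ^ ((1:ℝ)/4)) :=
        mul_le_mul_right (aux_chain n y) _
    _ ≤ ENNReal.ofReal K * ((2 * n : ℕ) : ℝ≥0∞) ^ ((3:ℝ)/4) *
      (⨆ m : M, (∑' k : ℕ, ((2:ℝ≥0∞) ^ (k:ℕ) * chainDiam 𝒜 k m) ^ 2) ^ ((1:ℝ)/2)) ^ ((1:ℝ)/2) := by
        rw [mul_assoc]
        refine mul_le_mul_right (mul_le_mul_right ?_ _) _
        have h1 : ∑ k ∈ Finset.range n, (y k) ^ 2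
            ≤ ∑' k : ℕ, ((2:ℝ≥0∞) ^ (k:ℕ) * chainDiam 𝒜 k (g t)) ^ 2 :=
          ENNReal.sum_le_tsum _
        calc (∑ k ∈ Finset.range n, (y k) ^ 2) ^ ((1:ℝ)/4)
            = ((∑ k ∈ Finset.range n, (y k) ^ 2) ^ ((1:ℝ)/2)) ^ ((1:ℝ)/2) := by
              rw [← ENNReal.rpow_mul]; norm_num
          _ ≤ _ := by
              refine ENNReal.rpow_le_rpow (ENNReal.rpow_le_rpow ?_ (by norm_num)) (by norm_num)
                |>.trans (ENNReal.rpow_le_rpow (le_iSup (fun m : M =>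
                  (∑' k : ℕ, ((2:ℝ≥0∞) ^ (k:ℕ) * chainDiam 𝒜 k m) ^ 2) ^ ((1:ℝ)/2)) (g t)) (by norm_num))
              exact h1

lemma aux_sq_rpow (x : ℝ≥0∞) : (x ^ 2) ^ ((1:ℝ)/2) = x := by
  rw [← ENNReal.rpow_natCast x 2, ← ENNReal.rpow_mul]
  norm_num


/-- Talagrand, Lemma 3.4.6: if `T` is finite with `|T| ≥ 2` and
`f : M → T` is surjective with `d_T(f a, f b) ≤ K d_M(a,b)^{1/2}`, then
`γ₂(T) ≤ C K (log log |T|)^{3/4} γ₁,₂(M)^{1/2}` for a universal constant `C`. -/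
theorem stmt_19 :
    ∃ C : ℝ, 0 < C ∧
      ∀ (M T : Type) [MetricSpace M] [MetricSpace T] [Finite T],
        2 ≤ Nat.card T →
        ∀ (f : M → T) (K : ℝ), 0 < K →
          Function.Surjective f →
          (∀ a b : M, dist (f a) (f b) ≤ K * Real.sqrt (dist a b)) →
          gamma2 T ≤
            ENNReal.ofReal
                (C * K * Real.log (Real.log (Nat.card T)) ^ ((3 : ℝ) / 4)) *
              gamma12 M ^ ((1 : ℝ) / 2) := by
  refine ⟨270, by norm_num, ?_⟩
  intro M T _ _ _ hT f K hK hf hlip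
  have hTne : Nonempty T := (Nat.card_pos_iff.1 (by omega)).1
  obtain ⟨t0⟩ := hTne
  obtain ⟨m0, -⟩ := hf t0
  have hMne : Nonempty M := ⟨m0⟩
  set N := Nat.card T with hN
  have hex : ∃ n, N ≤ 2 ^ 2 ^ n := ⟨N, le_trans (Nat.lt_two_pow_self (n := N)).le
    (Nat.pow_le_pow_right (by norm_num) (Nat.lt_two_pow_self (n := N)).le)⟩
  set n := Nat.find hex with hn
  have hn_le : N ≤ 2 ^ 2 ^ n := Nat.find_spec hex
  rcases eq_or_lt_of_le hT with h2 | h3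
  · -- |T| = 2 : gamma2 T = 0
    have h0 : gamma2 T ≤ ENNReal.ofReal K * ((2 * 0 : ℕ) : ℝ≥0∞) ^ ((3:ℝ)/4) *
        (⨆ m : M, (∑' k : ℕ, ((2:ℝ≥0∞) ^ (k:ℕ) *
          chainDiam (fun _ => {Set.univ}) k m) ^ 2) ^ ((1:ℝ)/2)) ^ ((1:ℝ)/2) :=
      construct 0 (by omega) f K hK.le hf hlip (trivialSeq_admissible M)
    have : gamma2 T = 0 := by
      refine le_antisymm (h0.trans ?_) zero_le
      rw [show ((2 * 0 : ℕ) : ℝ≥0∞) = 0 by norm_num, ENNReal.zero_rpow_of_pos (by norm_num)]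
      simp
    rw [this]; exact zero_le
  · -- |T| ≥ 3
    have hn1 : 1 ≤ n := by
      rw [hn, Nat.one_le_iff_ne_zero]
      intro h0
      have := Nat.find_spec hex
      rw [h0] at this
      norm_num at this
      omega
    have hmin : 2 ^ 2 ^ (n - 1) < N := by
      have := Nat.find_min hex (m := n - 1) (by omega)
      omega
    set L : ℝ := Real.log (Real.log N) with hL
    have hnum : (2 * n : ℝ) ≤ 270 * L := aux_numeric (by omega) hn1 hmin
    have hLpos : (0:ℝ) < L := by
      have h1 : Real.log 3 ≤ Real.log N :=
        Real.log_le_log (by norm_num) (by exact_mod_cast (by omega : 3 ≤ N))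
      have := aux_loglog3
      have h2 := Real.log_le_log (lt_of_lt_of_le (by norm_num) aux_log3) h1
      rw [hL]; linarith
    set D : ℝ≥0∞ := ENNReal.ofReal K * ((2 * n : ℕ) : ℝ≥0∞) ^ ((3:ℝ)/4) with hD
    have hD0 : D ≠ 0 := by
      rw [hD]
      refine mul_ne_zero ?_ ?_
      · simp [ENNReal.ofReal_eq_zero]; linarith
      · refine (ENNReal.rpow_pos ?_ (ENNReal.natCast_ne_top _)).ne'
        have h0 : (0:ℕ) < 2 * n := by omega
        exact_mod_cast h0
    have hDtop : D ≠ ∞ := by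
      rw [hD]
      exact ENNReal.mul_ne_top ENNReal.ofReal_ne_top
        (ENNReal.rpow_ne_top_of_nonneg (by norm_num) (ENNReal.natCast_ne_top _))
    have key : ∀ 𝒜 : ℕ → Set (Set M), IsAdmissibleSeq M 𝒜 →
        gamma2 T ≤ D * ((⨆ m : M, (∑' k : ℕ, ((2:ℝ≥0∞) ^ (k:ℕ) *
          chainDiam 𝒜 k m) ^ 2) ^ ((1:ℝ)/2))) ^ ((1:ℝ)/2) := by
      intro 𝒜 h𝒜
      rw [hD]
      exact construct n hn_le f K hK.le hf hlip h𝒜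
    have key2 : gamma2 T ^ 2 ≤ D ^ 2 * gamma12 M := by
      by_cases hg : gamma12 M = ∞
      · rw [hg, ENNReal.mul_top (pow_ne_zero 2 hD0)]
        exact le_top
      · refine ENNReal.le_of_forall_pos_le_add fun ε hε hfin => ?_
        have hD2 : D ^ 2 ≠ 0 := pow_ne_zero 2 hD0
        have hD2t : D ^ 2 ≠ ∞ := by
          simp only [pow_two]; exact ENNReal.mul_ne_top hDtop hDtop
        set δ : ℝ≥0∞ := (ε : ℝ≥0∞) / D ^ 2 with hδ
        have hδ0 : δ ≠ 0 := by
          rw [hδ]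
          simp [ENNReal.div_eq_zero_iff, hD2t]
          exact_mod_cast hε.ne'
        have hlt : gamma12 M < gamma12 M + δ :=
          ENNReal.lt_add_right hg hδ0
        rw [gamma12] at hlt
        obtain ⟨𝒜, hlt2⟩ := iInf_lt_iff.1 hlt
        obtain ⟨h𝒜, hS⟩ := iInf_lt_iff.1 hlt2
        have h1 := key 𝒜 h𝒜
        have h2 : gamma2 T ^ 2 ≤ D ^ 2 *
            ((⨆ m : M, (∑' k : ℕ, ((2:ℝ≥0∞) ^ (k:ℕ) *
              chainDiam 𝒜 k m) ^ 2) ^ ((1:ℝ)/2))) := by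
          calc gamma2 T ^ 2 ≤ (D * ((⨆ m : M, (∑' k : ℕ, ((2:ℝ≥0∞) ^ (k:ℕ) *
              chainDiam 𝒜 k m) ^ 2) ^ ((1:ℝ)/2))) ^ ((1:ℝ)/2)) ^ 2 := by
                rw [sq, sq]; exact mul_le_mul' h1 h1
            _ = _ := by rw [mul_pow, aux_rpow_sq]
        refine h2.trans ?_
        calc D ^ 2 * _ ≤ D ^ 2 * (gamma12 M + δ) := mul_le_mul_right hS.le _
          _ = D ^ 2 * gamma12 M + D ^ 2 * δ := by rw [mul_add]
          _ = D ^ 2 * gamma12 M + ε := by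
              rw [hδ, ENNReal.mul_div_cancel hD2 hD2t]
    have key3 : gamma2 T ≤ D * gamma12 M ^ ((1:ℝ)/2) := by
      have := ENNReal.rpow_le_rpow key2 (by norm_num : (0:ℝ) ≤ 1/2)
      rwa [aux_sq_rpow, ENNReal.mul_rpow_of_nonneg _ _ (by norm_num), aux_sq_rpow] at this
    refine key3.trans (mul_le_mul_left ?_ _)
    -- D ≤ ofReal (270 * K * L ^ (3/4))
    have hcast : ((2 * n : ℕ) : ℝ≥0∞) = ENNReal.ofReal ((2 * n : ℕ) : ℝ) := by
      rw [ENNReal.ofReal_natCast]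
    rw [hD, hcast, ENNReal.ofReal_rpow_of_nonneg (by positivity) (by norm_num),
      ← ENNReal.ofReal_mul hK.le]
    refine ENNReal.ofReal_le_ofReal ?_
    have hstep : ((2 * n : ℕ) : ℝ) ^ ((3:ℝ)/4) ≤ 270 * L ^ ((3:ℝ)/4) := by
      calc ((2 * n : ℕ) : ℝ) ^ ((3:ℝ)/4) ≤ (270 * L) ^ ((3:ℝ)/4) := by
            refine Real.rpow_le_rpow (by positivity) ?_ (by norm_num)
            push_cast
            exact hnum
        _ = (270:ℝ) ^ ((3:ℝ)/4) * L ^ ((3:ℝ)/4) :=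
            Real.mul_rpow (by norm_num) hLpos.le
        _ ≤ 270 * L ^ ((3:ℝ)/4) := by
            refine mul_le_mul_of_nonneg_right ?_ (Real.rpow_nonneg hLpos.le _)
            calc (270:ℝ) ^ ((3:ℝ)/4) ≤ (270:ℝ) ^ (1:ℝ) :=
                  Real.rpow_le_rpow_of_exponent_le (by norm_num) (by norm_num)
              _ = 270 := Real.rpow_one _
    calc K * ((2 * n : ℕ) : ℝ) ^ ((3:ℝ)/4) ≤ K * (270 * L ^ ((3:ℝ)/4)) :=
          mul_le_mul_of_nonneg_left hstep hK.le
      _ = 270 * K * L ^ ((3:ℝ)/4) := by ring
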